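/- Let p and q be distinct primes and let f : (ZMod p)^n × (ZMod q)^n → ZMod p × ZMod q be a function preserving π₁. Then f preserves the commutator relation [π₁, π₁] = 0 (i.e., preserves ρ(π₁, π₁, 0)) if and only if there exist a function f_c : (ZMod p)^n → ZMod q, coefficients (a_m)_{m ∈ ({0,...,p−1})^n} ⊆ ZMod p, and a function f₁ : (ZMod p)^n → (ZMod q)^n such that f(x, y) = (∑_m a_m x^m, ⟨f₁(x), y⟩ + f_c(x)) for all (x, y). -/
import Mathlib

open MvPolynomial in
lemma poly_interp (p n : ℕ) (hp : p.Prime) (g : (Fin n → ZMod p) → ZMod p) :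
    ∃ a : (Fin n → Fin p) → ZMod p,
      ∀ x, g x = ∑ m : Fin n → Fin p, a m * ∏ i, x i ^ (m i : ℕ) := by
  haveI := Fact.mk hp
  have hcard : Fintype.card (ZMod p) = p := ZMod.card p
  have hg : g ∈ (Submodule.map (evalₗ (ZMod p) (Fin n))
      (restrictDegree (Fin n) (ZMod p) (Fintype.card (ZMod p) - 1))) := by
    rw [map_restrict_dom_evalₗ]; trivial
  obtain ⟨P, hP, hPg⟩ := hg
  rw [SetLike.mem_coe, mem_restrictDegree] at hP
  classical
  set emb : (Fin n → Fin p) → (Fin n →₀ ℕ) :=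
    fun m => Finsupp.equivFunOnFinite.symm (fun i => (m i : ℕ)) with hemb
  have hembinj : Function.Injective emb := by
    intro m₁ m₂ h
    have := Finsupp.equivFunOnFinite.symm.injective h
    funext i
    exact Fin.val_injective (congrFun this i)
  refine ⟨fun m => P.coeff (emb m), fun x => ?_⟩
  have h1 : g x = eval x P := (congrFun hPg x).symm
  rw [h1, eval_eq']
  have hsub : P.support ⊆ Finset.univ.image emb := by
    intro d hd
    have hp0 : 0 < p := hp.pos
    have hlt : ∀ i, d i < p := by
      intro i
      have := hP d hd i
      rw [hcard] at this
      omega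
    refine Finset.mem_image.mpr ⟨fun i => ⟨d i, hlt i⟩, Finset.mem_univ _, ?_⟩
    apply (Finsupp.equivFunOnFinite.symm_apply_eq).mpr
    ext i
    rfl
  rw [Finset.sum_subset hsub (fun d _ hd => by
    rw [MvPolynomial.notMem_support_iff.mp hd, zero_mul])]
  rw [Finset.sum_image (fun m _ m' _ h => hembinj h)]
  rfl

theorem preserves_commutator_iff_explicit_form (p q n : ℕ) (hp : p.Prime) (hq : q.Prime)
    (hpq : p ≠ q)
    (f : (Fin n → ZMod p) × (Fin n → ZMod q) → ZMod p × ZMod q)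
    (hf : ∀ (x₁ x₂ : Fin n → ZMod p) (y₁ y₂ : Fin n → ZMod q),
        x₁ = x₂ → (f (x₁, y₁)).1 = (f (x₂, y₂)).1) :
    (∀ a b c d : Fin n → ZMod p × ZMod q,
        (∀ i, (a i).1 = (b i).1 ∧ (b i).1 = (c i).1 ∧ a i - b i + c i = d i) →
        letI F : (Fin n → ZMod p × ZMod q) → ZMod p × ZMod q :=
          fun v => f (fun i => (v i).1, fun i => (v i).2)
        (F a).1 = (F b).1 ∧ (F b).1 = (F c).1 ∧ F a - F b + F c = F d) ↔
      ∃ (fc : (Fin n → ZMod p) → ZMod q) (a : (Fin n → Fin p) → ZMod p)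
        (f₁ : (Fin n → ZMod p) → (Fin n → ZMod q)),
        ∀ (x : Fin n → ZMod p) (y : Fin n → ZMod q),
          f (x, y) = (∑ m : Fin n → Fin p, a m * ∏ i, x i ^ (m i : ℕ),
            (∑ i, f₁ x i * y i) + fc x) := by
  constructor
  · intro h
    obtain ⟨a, ha⟩ := poly_interp p n hp (fun x => (f (x, 0)).1)
    refine ⟨fun x => (f (x, 0)).2, a,
      fun x i => (f (x, fun j => if i = j then 1 else 0)).2 - (f (x, 0)).2, fun x y => ?_⟩
    have key : ∀ y₁ y₂ : Fin n → ZMod q,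
        (f (x, y₁ + y₂)).2 = (f (x, y₁)).2 - (f (x, 0)).2 + (f (x, y₂)).2 := by
      intro y₁ y₂
      have h3 := (h (fun i => (x i, y₁ i)) (fun i => (x i, 0)) (fun i => (x i, y₂ i))
        (fun i => (x i, y₁ i + y₂ i)) (fun i => ⟨rfl, rfl, by
          rw [Prod.mk_sub_mk, Prod.mk_add_mk, Prod.mk.injEq]
          constructor <;> ring⟩)).2.2
      have h2 := congrArg Prod.snd h3
      exact h2.symm
    set L : (Fin n → ZMod q) →ₗ[ZMod q] ZMod q :=
      AddMonoidHom.toZModLinearMap q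
        { toFun := fun y => (f (x, y)).2 - (f (x, 0)).2
          map_zero' := sub_self _
          map_add' := fun y₁ y₂ => by show (f (x, y₁ + y₂)).2 - (f (x, 0)).2 = _; rw [key y₁ y₂]; ring } with hL
    have hLy := LinearMap.pi_apply_eq_sum_univ L y
    have hLapp : ∀ y', L y' = (f (x, y')).2 - (f (x, 0)).2 := fun _ => rfl
    simp only [hLapp, smul_eq_mul] at hLy
    refine Prod.ext ((hf x x y 0 rfl).trans (ha x)) ?_
    rw [sub_eq_iff_eq_add] at hLy
    rw [hLy]
    congr 1
    exact Finset.sum_congr rfl fun i _ => mul_comm _ _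
  · rintro ⟨fc, a, f₁, hform⟩ A B C D hrel
    have exB : (fun i => (B i).1) = (fun i => (A i).1) := funext fun i => ((hrel i).1).symm
    have exC : (fun i => (C i).1) = (fun i => (A i).1) :=
      funext fun i => ((hrel i).2.1.symm.trans ((hrel i).1).symm)
    have hxD : ∀ i, (D i).1 = (A i).1 := by
      intro i
      have := congrArg Prod.fst (hrel i).2.2
      rw [← this]
      have h1 := (hrel i).1
      have h2 := (hrel i).2.1
      show (A i).1 - (B i).1 + (C i).1 = (A i).1
      rw [← h1, ← h2, ← h1]; ring
    have exD : (fun i => (D i).1) = (fun i => (A i).1) := funext hxD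
    have eyD : (fun i => (D i).2) = (fun i => (A i).2 - (B i).2 + (C i).2) := by
      funext i
      have := congrArg Prod.snd (hrel i).2.2
      exact this.symm
    refine ⟨hf _ _ _ _ exB.symm, hf _ _ _ _ (funext fun i => (hrel i).2.1), ?_⟩
    show f (fun i => (A i).1, fun i => (A i).2) - f (fun i => (B i).1, fun i => (B i).2)
        + f (fun i => (C i).1, fun i => (C i).2) = f (fun i => (D i).1, fun i => (D i).2)
    rw [exB, exC, exD, eyD, hform, hform, hform, hform]
    rw [Prod.mk_sub_mk, Prod.mk_add_mk, Prod.mk.injEq]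
    refine ⟨by ring, ?_⟩
    simp only [mul_sub, mul_add, Finset.sum_add_distrib, Finset.sum_sub_distrib]
    ring
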